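/- The remove-leafs simplification is unsound in the presence of weak rules: there exist abstract rewrite systems (on a type of terms) with strict rules S = {g# → c0}, weak rules W = {f# → c2(f#, g#)}, and start term f#, such that the relative relation S/W admits arbitrarily long derivations from f# (the derivation height of f# is undefined), while after removing the strict rule (S' = ∅) the derivation height of f# with respect to S'/W is 0. -/

import Mathlib

/-- Terms built from the constants `f#`, `g#`, `c₀` and the binary compound symbol `c₂`. -/
inductive T19 : Type
  | fs : T19   -- f#
  | gs : T19   -- g#
  | c0 : T19   -- c₀
  | c2 : T19 → T19 → T19  -- c₂(·,·)

/-- The weak rewrite relation: rewrite any occurrence of `f#` to `c₂(f#, g#)`. -/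
inductive Wstep : T19 → T19 → Prop
  | root : Wstep T19.fs (T19.c2 T19.fs T19.gs)
  | left {s t u} : Wstep s t → Wstep (T19.c2 s u) (T19.c2 t u)
  | right {s t u} : Wstep s t → Wstep (T19.c2 u s) (T19.c2 u t)

/-- The strict rewrite relation: rewrite any occurrence of `g#` to `c₀`. -/
inductive Sstep : T19 → T19 → Prop
  | root : Sstep T19.gs T19.c0
  | left {s t u} : Sstep s t → Sstep (T19.c2 s u) (T19.c2 t u)
  | right {s t u} : Sstep s t → Sstep (T19.c2 u s) (T19.c2 u t)

/-- The relative relation `S/W = W* ∘ S ∘ W*`. -/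
def relStep (S W : T19 → T19 → Prop) (s t : T19) : Prop :=
  ∃ u v, Relation.ReflTransGen W s u ∧ S u v ∧ Relation.ReflTransGen W v t

def A19 : ℕ → T19
  | 0 => T19.fs
  | n + 1 => T19.c2 (A19 n) T19.c0

lemma relStep_left {s t u : T19} (h : relStep Sstep Wstep s t) :
    relStep Sstep Wstep (T19.c2 s u) (T19.c2 t u) := by
  obtain ⟨a, b, h1, h2, h3⟩ := h
  exact ⟨T19.c2 a u, T19.c2 b u,
    Relation.ReflTransGen.lift (fun x => T19.c2 x u) (fun _ _ => Wstep.left) _ _ h1,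
    Sstep.left h2,
    Relation.ReflTransGen.lift (fun x => T19.c2 x u) (fun _ _ => Wstep.left) _ _ h3⟩

lemma A19_step : ∀ n, relStep Sstep Wstep (A19 n) (A19 (n + 1))
  | 0 => ⟨T19.c2 T19.fs T19.gs, T19.c2 T19.fs T19.c0,
      Relation.ReflTransGen.single Wstep.root, Sstep.right Sstep.root,
      Relation.ReflTransGen.refl⟩
  | n + 1 => relStep_left (A19_step n)

/-- the remove-leafs simplification is unsound in the presence of weak
rules. With strict rule `g# → c₀` and weak rule `f# → c₂(f#, g#)`, the relative relation
`S/W` admits arbitrarily long derivations from `f#` (the derivation height of `f#` is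
undefined), while after removing the strict rule (`S' = ∅`) every `S'/W`-chain from `f#`
has length `0`. -/
theorem stmt_19 :
    (∀ B : ℕ, ∃ (n : ℕ) (c : ℕ → T19), B < n ∧ c 0 = T19.fs ∧
      ∀ i < n, relStep Sstep Wstep (c i) (c (i + 1))) ∧
    (∀ (n : ℕ) (c : ℕ → T19), c 0 = T19.fs →
      (∀ i < n, relStep (fun _ _ => False) Wstep (c i) (c (i + 1))) → n = 0) := by
  constructor
  · intro B
    exact ⟨B + 1, A19, Nat.lt_succ_self B, rfl, fun i _ => A19_step i⟩
  · intro n c _ h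
    by_contra hn
    obtain ⟨_, _, _, hF, _⟩ := h 0 (Nat.pos_of_ne_zero hn)
    exact hF
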